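/- Let (A_k)_{k≥1} be a sequence of 3×3 real matrices, where A_k has rows (t_k, 0, 0), (−s_k/2, 1/10, 0), (c_k/2, 0, 1/10) with s_k² + c_k² ≤ 1 and t_k ≥ 1. Let 𝒞 = {(v₁,v₂,v₃) ∈ ℝ³ : 2|v₁| ≥ √(v₂² + v₃²)}. Then the sets A_1A_2⋯A_n(𝒞), n ≥ 1, are nested decreasing, and there exist real numbers s₂*, s₃* with (s₂*)² + (s₃*)² ≤ 49/100 such that ⋂_{n≥1} A_1A_2⋯A_n(𝒞) = {(u, s₂*·u, s₃*·u) : u ∈ ℝ}, a one-dimensional linear subspace of ℝ³. -/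

import Mathlib

open Matrix

/-- `matProdL A n = A 1 * A 2 * ⋯ * A n`, with `matProdL A 0 = 1`. -/
def matProdL (A : ℕ → Matrix (Fin 3) (Fin 3) ℝ) : ℕ → Matrix (Fin 3) (Fin 3) ℝ
  | 0 => 1
  | n + 1 => matProdL A n * A (n + 1)

/-- The centre-unstable cone `𝒞 = {v : 2|v₁| ≥ √(v₂² + v₃²)}`. -/
noncomputable def cuCone : Set (Fin 3 → ℝ) :=
  {v | Real.sqrt ((v 1) ^ 2 + (v 2) ^ 2) ≤ 2 * |v 0|}

open Filter Topology

lemma sqrt_mul' (k a b : ℝ) :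
    Real.sqrt ((k*a)^2+(k*b)^2) = |k| * Real.sqrt (a^2+b^2) := by
  rw [show (k*a)^2+(k*b)^2 = k^2*(a^2+b^2) by ring, Real.sqrt_mul (sq_nonneg k),
    Real.sqrt_sq_eq_abs]


/-- image of the cone under a matrix of the special triangular form -/
lemma imageChar (T ξ η : ℝ) (n : ℕ) (hT : 1 ≤ T) :
    (!![T, 0, 0; ξ * T, (1/10:ℝ)^n, 0; η * T, 0, (1/10:ℝ)^n]).mulVec '' cuCone
      = {w : Fin 3 → ℝ | Real.sqrt ((w 1 - ξ * w 0)^2 + (w 2 - η * w 0)^2)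
          ≤ (2 * (1/10:ℝ)^n / T) * |w 0|} := by
  have hT0 : T ≠ 0 := by linarith
  have hq : (0:ℝ) < (1/10:ℝ)^n := by positivity
  have hq' : ((1:ℝ)/10)^n ≠ 0 := ne_of_gt hq
  ext w
  constructor
  · rintro ⟨v, hv, rfl⟩
    have h0 : (!![T, 0, 0; ξ * T, (1/10:ℝ)^n, 0; η * T, 0, (1/10:ℝ)^n]).mulVec v 0 = T * v 0 := by
      simp [Matrix.mulVec, dotProduct, Matrix.vecHead, Matrix.vecTail, Fin.sum_univ_three]
    have h1 : (!![T, 0, 0; ξ * T, (1/10:ℝ)^n, 0; η * T, 0, (1/10:ℝ)^n]).mulVec v 1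
        = ξ * T * v 0 + (1/10:ℝ)^n * v 1 := by
      simp [Matrix.mulVec, dotProduct, Matrix.vecHead, Matrix.vecTail, Fin.sum_univ_three]
    have h2 : (!![T, 0, 0; ξ * T, (1/10:ℝ)^n, 0; η * T, 0, (1/10:ℝ)^n]).mulVec v 2
        = η * T * v 0 + (1/10:ℝ)^n * v 2 := by
      simp [Matrix.mulVec, dotProduct, Matrix.vecHead, Matrix.vecTail, Fin.sum_univ_three]
    simp only [Set.mem_setOf_eq, h0, h1, h2]
    have e1 : ξ * T * v 0 + (1/10:ℝ)^n * v 1 - ξ * (T * v 0) = (1/10:ℝ)^n * v 1 := by ring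
    have e2 : η * T * v 0 + (1/10:ℝ)^n * v 2 - η * (T * v 0) = (1/10:ℝ)^n * v 2 := by ring
    rw [e1, e2, sqrt_mul', abs_of_pos hq, abs_mul, abs_of_pos (by linarith : (0:ℝ) < T)]
    have hvc : Real.sqrt ((v 1)^2 + (v 2)^2) ≤ 2 * |v 0| := hv
    calc (1/10:ℝ)^n * Real.sqrt ((v 1)^2 + (v 2)^2) ≤ (1/10:ℝ)^n * (2 * |v 0|) := by
          exact mul_le_mul_of_nonneg_left hvc (le_of_lt hq)
      _ = 2 * (1/10:ℝ)^n / T * (T * |v 0|) := by field_simp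
  · intro hw
    refine ⟨![w 0 / T, (w 1 - ξ * w 0) * 10^n, (w 2 - η * w 0) * 10^n], ?_, ?_⟩
    · show Real.sqrt (((w 1 - ξ * w 0) * 10^n)^2 + ((w 2 - η * w 0) * 10^n)^2)
        ≤ 2 * |w 0 / T|
      rw [show ((w 1 - ξ * w 0) * 10^n)^2 + ((w 2 - η * w 0) * 10^n)^2
        = ((10:ℝ)^n * (w 1 - ξ * w 0))^2 + ((10:ℝ)^n * (w 2 - η * w 0))^2 by ring,
        sqrt_mul', abs_of_pos (by positivity : (0:ℝ) < (10:ℝ)^n)]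
      have := hw
      rw [Set.mem_setOf_eq] at this
      rw [abs_div, abs_of_pos (by linarith : (0:ℝ) < T)]
      calc (10:ℝ)^n * Real.sqrt ((w 1 - ξ * w 0)^2 + (w 2 - η * w 0)^2)
          ≤ (10:ℝ)^n * ((2 * (1/10:ℝ)^n / T) * |w 0|) :=
            mul_le_mul_of_nonneg_left this (by positivity)
        _ = 2 * (|w 0| / T) := by rw [div_pow, one_pow]; field_simp
    · funext i
      fin_cases i <;>
        simp [Matrix.mulVec, dotProduct, Matrix.vecHead, Matrix.vecTail, Fin.sum_univ_three] <;>
        field_simp <;> ring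



noncomputable def prodT (t : ℕ → ℝ) : ℕ → ℝ
  | 0 => 1
  | n+1 => prodT t n * t (n+1)

noncomputable def slX (t s : ℕ → ℝ) : ℕ → ℝ
  | 0 => 0
  | n+1 => slX t s n - (1/10)^n * s (n+1) / (2 * prodT t (n+1))

noncomputable def slY (t c : ℕ → ℝ) : ℕ → ℝ
  | 0 => 0
  | n+1 => slY t c n + (1/10)^n * c (n+1) / (2 * prodT t (n+1))

lemma cs_sqrt (a b c d : ℝ) :
    a*c + b*d ≤ Real.sqrt (a^2+b^2) * Real.sqrt (c^2+d^2) := by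
  have h1 : (0:ℝ) ≤ a^2+b^2 := by positivity
  have h2 : (0:ℝ) ≤ c^2+d^2 := by positivity
  rw [← Real.sqrt_mul h1]
  rcases le_or_gt (a*c+b*d) 0 with h|h
  · exact h.trans (Real.sqrt_nonneg _)
  · rw [Real.le_sqrt h.le]
    · nlinarith [sq_nonneg (a*d - b*c)]
    · positivity

lemma tri (a b c d : ℝ) :
    Real.sqrt ((a+c)^2+(b+d)^2) ≤ Real.sqrt (a^2+b^2) + Real.sqrt (c^2+d^2) := by
  have h1 : (0:ℝ) ≤ a^2+b^2 := by positivity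
  have hs1 := Real.sq_sqrt h1
  have hs2 := Real.sq_sqrt (show (0:ℝ) ≤ c^2+d^2 by positivity)
  have hcs := cs_sqrt a b c d
  have hrhs : (0:ℝ) ≤ Real.sqrt (a^2+b^2) + Real.sqrt (c^2+d^2) :=
    add_nonneg (Real.sqrt_nonneg _) (Real.sqrt_nonneg _)
  rw [show Real.sqrt (a^2+b^2) + Real.sqrt (c^2+d^2)
      = Real.sqrt ((Real.sqrt (a^2+b^2) + Real.sqrt (c^2+d^2))^2) by
        rw [Real.sqrt_sq hrhs]]
  apply Real.sqrt_le_sqrt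
  nlinarith

lemma abs_le_sqrt' (a b : ℝ) : |a| ≤ Real.sqrt (a^2 + b^2) := by
  rw [← Real.sqrt_sq_eq_abs]
  exact Real.sqrt_le_sqrt (by nlinarith [sq_nonneg b])

section
variable (t s c : ℕ → ℝ)

lemma prodT_ge_one (ht : ∀ k, 1 ≤ k → 1 ≤ t k) : ∀ n, 1 ≤ prodT t n
  | 0 => le_refl 1
  | n+1 => by
      have h1 := prodT_ge_one ht n
      have h2 := ht (n+1) (Nat.le_add_left 1 n)
      simpa [prodT] using one_le_mul_of_one_le_of_one_le h1 h2

lemma prodT_mono (ht : ∀ k, 1 ≤ k → 1 ≤ t k) {m n : ℕ} (h : m ≤ n) :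
    prodT t m ≤ prodT t n := by
  induction n with
  | zero => simp [Nat.le_zero.mp h]
  | succ n ih =>
    rcases Nat.lt_or_ge m (n+1) with h'|h'
    · have := ih (Nat.lt_succ_iff.mp h')
      calc prodT t m ≤ prodT t n := this
        _ ≤ prodT t n * t (n+1) := le_mul_of_one_le_right
            (le_trans zero_le_one (prodT_ge_one t ht n)) (ht (n+1) (Nat.le_add_left 1 n))
        _ = prodT t (n+1) := rfl
    · have : m = n+1 := le_antisymm h h'
      simp [this]

lemma stepBound (ht : ∀ k, 1 ≤ k → 1 ≤ t k) (hsc : ∀ k, 1 ≤ k → (s k)^2 + (c k)^2 ≤ 1)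
    (m : ℕ) :
    Real.sqrt ((slX t s (m+1) - slX t s m)^2 + (slY t c (m+1) - slY t c m)^2)
      ≤ (1/10:ℝ)^m / (2 * prodT t m) := by
  have hT0 := prodT_ge_one t ht m
  have hT1 := prodT_ge_one t ht (m+1)
  have hTm := prodT_mono t ht (Nat.le_succ m)
  have hsc' := hsc (m+1) (Nat.le_add_left 1 m)
  have e1 : slX t s (m+1) - slX t s m
      = -((1/10:ℝ)^m * s (m+1) / (2 * prodT t (m+1))) := by
    simp [slX]
  have e2 : slY t c (m+1) - slY t c m
      = (1/10:ℝ)^m * c (m+1) / (2 * prodT t (m+1)) := by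
    simp [slY]
  rw [e1, e2]
  have hq : (0:ℝ) < (1/10:ℝ)^m := by positivity
  calc Real.sqrt ((-((1/10:ℝ)^m * s (m+1) / (2 * prodT t (m+1))))^2
        + ((1/10:ℝ)^m * c (m+1) / (2 * prodT t (m+1)))^2)
      ≤ Real.sqrt (((1/10:ℝ)^m / (2 * prodT t (m+1)))^2) := by
        apply Real.sqrt_le_sqrt
        have hpos : (0:ℝ) ≤ ((1/10:ℝ)^m / (2 * prodT t (m+1)))^2 := by positivity
        have : ((-((1/10:ℝ)^m * s (m+1) / (2 * prodT t (m+1))))^2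
            + ((1/10:ℝ)^m * c (m+1) / (2 * prodT t (m+1)))^2)
            = ((1/10:ℝ)^m / (2 * prodT t (m+1)))^2 * ((s (m+1))^2 + (c (m+1))^2) := by
          ring
        rw [this]
        nlinarith
    _ = (1/10:ℝ)^m / (2 * prodT t (m+1)) := Real.sqrt_sq (by positivity)
    _ ≤ (1/10:ℝ)^m / (2 * prodT t m) := by gcongr

lemma chainBound (ht : ∀ k, 1 ≤ k → 1 ≤ t k) (hsc : ∀ k, 1 ≤ k → (s k)^2 + (c k)^2 ≤ 1)
    (n : ℕ) : ∀ m, n ≤ m →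
    Real.sqrt ((slX t s m - slX t s n)^2 + (slY t c m - slY t c n)^2)
      ≤ (5/9) * ((1/10:ℝ)^n - (1/10:ℝ)^m) / prodT t n := by
  intro m hm
  induction m, hm using Nat.le_induction with
  | base => simp
  | succ m hm ih =>
    have hT0 : (1:ℝ) ≤ prodT t n := prodT_ge_one t ht n
    have hT0' : prodT t n ≠ 0 := by linarith
    calc Real.sqrt ((slX t s (m+1) - slX t s n)^2 + (slY t c (m+1) - slY t c n)^2)
        = Real.sqrt (((slX t s m - slX t s n) + (slX t s (m+1) - slX t s m))^2
            + ((slY t c m - slY t c n) + (slY t c (m+1) - slY t c m))^2) := by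
          congr 1; ring
      _ ≤ Real.sqrt ((slX t s m - slX t s n)^2 + (slY t c m - slY t c n)^2)
            + Real.sqrt ((slX t s (m+1) - slX t s m)^2 + (slY t c (m+1) - slY t c m)^2) :=
          tri _ _ _ _
      _ ≤ (5/9) * ((1/10:ℝ)^n - (1/10:ℝ)^m) / prodT t n
            + (1/10:ℝ)^m / (2 * prodT t m) := add_le_add ih (stepBound t s c ht hsc m)
      _ ≤ (5/9) * ((1/10:ℝ)^n - (1/10:ℝ)^m) / prodT t n
            + (1/10:ℝ)^m / (2 * prodT t n) := by
          gcongr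
          exact prodT_mono t ht hm
      _ = (5/9) * ((1/10:ℝ)^n - (1/10:ℝ)^(m+1)) / prodT t n := by
          rw [pow_succ]
          field_simp
          ring

lemma limitExists (ht : ∀ k, 1 ≤ k → 1 ≤ t k) (hsc : ∀ k, 1 ≤ k → (s k)^2 + (c k)^2 ≤ 1) :
    ∃ s₂ s₃ : ℝ, ∀ n,
      Real.sqrt ((s₂ - slX t s n)^2 + (s₃ - slY t c n)^2)
        ≤ (5/9) * (1/10:ℝ)^n / prodT t n := by
  have hstep : ∀ m, Real.sqrt ((slX t s (m+1) - slX t s m)^2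
      + (slY t c (m+1) - slY t c m)^2) ≤ (1/2) * (1/10:ℝ)^m := by
    intro m
    have h := stepBound t s c ht hsc m
    have hT := prodT_ge_one t ht m
    have : (1/10:ℝ)^m / (2 * prodT t m) ≤ (1/2) * (1/10:ℝ)^m := by
      rw [div_le_iff₀ (by linarith)]
      have hq : (0:ℝ) ≤ (1/10:ℝ)^m := by positivity
      nlinarith
    linarith
  have hcX : CauchySeq (slX t s) := by
    apply cauchySeq_of_le_geometric (1/10 : ℝ) (1/2 : ℝ) (by norm_num)
    intro m
    rw [Real.dist_eq, abs_sub_comm]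
    calc |slX t s (m+1) - slX t s m|
        ≤ Real.sqrt ((slX t s (m+1) - slX t s m)^2 + (slY t c (m+1) - slY t c m)^2) :=
          abs_le_sqrt' _ _
      _ ≤ (1/2) * (1/10:ℝ)^m := hstep m
  have hcY : CauchySeq (slY t c) := by
    apply cauchySeq_of_le_geometric (1/10 : ℝ) (1/2 : ℝ) (by norm_num)
    intro m
    rw [Real.dist_eq, abs_sub_comm]
    calc |slY t c (m+1) - slY t c m|
        ≤ Real.sqrt ((slY t c (m+1) - slY t c m)^2 + (slX t s (m+1) - slX t s m)^2) :=
          abs_le_sqrt' _ _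
      _ = Real.sqrt ((slX t s (m+1) - slX t s m)^2 + (slY t c (m+1) - slY t c m)^2) := by
          congr 1; ring
      _ ≤ (1/2) * (1/10:ℝ)^m := hstep m
  obtain ⟨s₂, hξ⟩ := cauchySeq_tendsto_of_complete hcX
  obtain ⟨s₃, hη⟩ := cauchySeq_tendsto_of_complete hcY
  refine ⟨s₂, s₃, fun n => ?_⟩
  have hlim : Tendsto (fun m => Real.sqrt ((slX t s m - slX t s n)^2
      + (slY t c m - slY t c n)^2)) atTop
      (𝓝 (Real.sqrt ((s₂ - slX t s n)^2 + (s₃ - slY t c n)^2))) := by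
    have h1 : Tendsto (fun m => (slX t s m - slX t s n)^2
        + (slY t c m - slY t c n)^2) atTop
        (𝓝 ((s₂ - slX t s n)^2 + (s₃ - slY t c n)^2)) :=
      ((hξ.sub_const _).pow 2).add ((hη.sub_const _).pow 2)
    exact (Real.continuous_sqrt.continuousAt.tendsto.comp h1 : _)
  apply le_of_tendsto hlim
  filter_upwards [eventually_ge_atTop n] with m hm
  have h := chainBound t s c ht hsc n m hm
  have hT := prodT_ge_one t ht n
  have hq : (0:ℝ) ≤ (1/10:ℝ)^m := by positivity
  calc Real.sqrt ((slX t s m - slX t s n)^2 + (slY t c m - slY t c n)^2)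
      ≤ (5/9) * ((1/10:ℝ)^n - (1/10:ℝ)^m) / prodT t n := h
    _ ≤ (5/9) * (1/10:ℝ)^n / prodT t n := by
        gcongr
        linarith [sub_le_self ((1/10:ℝ)^n) hq]

lemma matForm (A : ℕ → Matrix (Fin 3) (Fin 3) ℝ) (hA : ∀ k, 1 ≤ k → A k = !![t k, 0, 0; -(s k)/2, 1/10, 0; (c k)/2, 0, 1/10])
    (ht : ∀ k, 1 ≤ k → 1 ≤ t k) : ∀ n,
    matProdL A n = !![prodT t n, 0, 0;
      slX t s n * prodT t n, (1/10:ℝ)^n, 0;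
      slY t c n * prodT t n, 0, (1/10:ℝ)^n] := by
  intro n
  induction n with
  | zero => simp [matProdL, prodT, slX, slY, Matrix.one_fin_three]
  | succ n ih =>
    have hT0 : prodT t n ≠ 0 := by
      have := prodT_ge_one t ht n; linarith
    have htn : t (n+1) ≠ 0 := by
      have := ht (n+1) (Nat.le_add_left 1 n); linarith
    rw [show matProdL A (n+1) = matProdL A n * A (n+1) from rfl, ih,
      hA (n+1) (Nat.le_add_left 1 n)]
    ext i j
    fin_cases i <;> fin_cases j <;>
      simp [Matrix.mul_apply, Fin.sum_univ_three, prodT, slX, slY] <;>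
      field_simp <;> ring

end

theorem nested_cones_line
    (A : ℕ → Matrix (Fin 3) (Fin 3) ℝ) (t s c : ℕ → ℝ)
    (hA : ∀ k, 1 ≤ k → A k = !![t k, 0, 0; -(s k)/2, 1/10, 0; (c k)/2, 0, 1/10])
    (hsc : ∀ k, 1 ≤ k → (s k) ^ 2 + (c k) ^ 2 ≤ 1)
    (ht : ∀ k, 1 ≤ k → 1 ≤ t k) :
    (∀ m n : ℕ, 1 ≤ m → m ≤ n →
      (matProdL A n).mulVec '' cuCone ⊆ (matProdL A m).mulVec '' cuCone) ∧
    ∃ s₂ s₃ : ℝ, s₂ ^ 2 + s₃ ^ 2 ≤ 49/100 ∧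
      (⋂ (n : ℕ) (_ : 1 ≤ n), (matProdL A n).mulVec '' cuCone)
        = Set.range (fun u : ℝ => ![u, s₂ * u, s₃ * u]) := by
  have hImg : ∀ n, (matProdL A n).mulVec '' cuCone
      = {w : Fin 3 → ℝ | Real.sqrt ((w 1 - slX t s n * w 0)^2 + (w 2 - slY t c n * w 0)^2)
          ≤ (2 * (1/10:ℝ)^n / prodT t n) * |w 0|} := by
    intro n
    rw [matForm t s c A hA ht n]
    exact imageChar (prodT t n) (slX t s n) (slY t c n) n (prodT_ge_one t ht n)
  obtain ⟨s₂, s₃, hphi⟩ := limitExists t s c ht hsc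
  constructor
  · -- nested
    intro m n _ hmn
    rw [hImg n, hImg m]
    intro w hw
    simp only [Set.mem_setOf_eq] at hw ⊢
    have hTm := prodT_ge_one t ht m
    have hTn := prodT_ge_one t ht n
    have hTmn := prodT_mono t ht hmn
    have hch := chainBound t s c ht hsc m n hmn
    have habs : (0:ℝ) ≤ |w 0| := abs_nonneg _
    have hqq : (1/10:ℝ)^n ≤ (1/10:ℝ)^m :=
      pow_le_pow_of_le_one (by norm_num) (by norm_num) hmn
    have hqn : (0:ℝ) < (1/10:ℝ)^n := by positivity
    have key : 2*(1/10:ℝ)^n/prodT t n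
        + (5/9)*((1/10:ℝ)^m - (1/10:ℝ)^n)/prodT t m ≤ 2*(1/10:ℝ)^m/prodT t m := by
      have h1 : 2*(1/10:ℝ)^n/prodT t n ≤ 2*(1/10:ℝ)^n/prodT t m := by
        gcongr
      have h2 : 2*(1/10:ℝ)^n/prodT t m + (5/9)*((1/10:ℝ)^m - (1/10:ℝ)^n)/prodT t m
          ≤ 2*(1/10:ℝ)^m/prodT t m := by
        rw [← add_div, div_le_div_iff₀ (by linarith) (by linarith)]
        nlinarith
      linarith
    calc Real.sqrt ((w 1 - slX t s m * w 0)^2 + (w 2 - slY t c m * w 0)^2)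
        = Real.sqrt (((w 1 - slX t s n * w 0) + ((slX t s n - slX t s m) * w 0))^2
            + ((w 2 - slY t c n * w 0) + ((slY t c n - slY t c m) * w 0))^2) := by
          congr 1; ring
      _ ≤ Real.sqrt ((w 1 - slX t s n * w 0)^2 + (w 2 - slY t c n * w 0)^2)
            + Real.sqrt (((slX t s n - slX t s m) * w 0)^2
              + ((slY t c n - slY t c m) * w 0)^2) := tri _ _ _ _
      _ ≤ (2*(1/10:ℝ)^n/prodT t n) * |w 0|
            + Real.sqrt ((slX t s n - slX t s m)^2 + (slY t c n - slY t c m)^2) * |w 0| := by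
          have e : Real.sqrt (((slX t s n - slX t s m) * w 0)^2
              + ((slY t c n - slY t c m) * w 0)^2)
              = |w 0| * Real.sqrt ((slX t s n - slX t s m)^2 + (slY t c n - slY t c m)^2) := by
            rw [show ((slX t s n - slX t s m) * w 0)^2 = (w 0 * (slX t s n - slX t s m))^2 by ring,
              show ((slY t c n - slY t c m) * w 0)^2 = (w 0 * (slY t c n - slY t c m))^2 by ring,
              sqrt_mul']
          rw [e, mul_comm (|w 0|)]
          exact add_le_add_left hw _
      _ ≤ (2*(1/10:ℝ)^m/prodT t m) * |w 0| := by
          have : Real.sqrt ((slX t s n - slX t s m)^2 + (slY t c n - slY t c m)^2)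
              ≤ (5/9)*((1/10:ℝ)^m - (1/10:ℝ)^n)/prodT t m := hch
          nlinarith
  · refine ⟨s₂, s₃, ?_, ?_⟩
    · have h0 := hphi 0
      simp only [slX, slY, prodT, pow_zero, sub_zero] at h0
      norm_num at h0
      have hnn : (0:ℝ) ≤ s₂^2 + s₃^2 := by positivity
      have := Real.sq_sqrt hnn
      nlinarith [Real.sqrt_nonneg (s₂^2 + s₃^2)]
    · apply Set.eq_of_subset_of_subset
      · intro w hw
        simp only [Set.mem_iInter] at hw
        have hmem : ∀ n, 1 ≤ n →
            Real.sqrt ((w 1 - slX t s n * w 0)^2 + (w 2 - slY t c n * w 0)^2)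
              ≤ (2*(1/10:ℝ)^n/prodT t n) * |w 0| := by
          intro n hn
          have := hw n hn
          rw [hImg n] at this
          exact this
        have h1 : w 1 = s₂ * w 0 := by
          have hb : ∀ n, 1 ≤ n → |w 1 - s₂ * w 0| ≤ 3 * (1/10:ℝ)^n * |w 0| := by
            intro n hn
            have hTn := prodT_ge_one t ht n
            have hqn : (0:ℝ) < (1/10:ℝ)^n := by positivity
            have hA1 : |w 1 - slX t s n * w 0| ≤ (2*(1/10:ℝ)^n/prodT t n) * |w 0| :=
              le_trans (abs_le_sqrt' _ _) (hmem n hn)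
            have hB1 : |s₂ - slX t s n| ≤ (5/9)*(1/10:ℝ)^n/prodT t n :=
              le_trans (abs_le_sqrt' _ _) (hphi n)
            have tri' : |w 1 - s₂*w 0|
                ≤ |w 1 - slX t s n * w 0| + |s₂ - slX t s n| * |w 0| := by
              have e : w 1 - s₂*w 0
                  = (w 1 - slX t s n * w 0) - (s₂ - slX t s n)*w 0 := by ring
              rw [e]
              refine (abs_sub _ _).trans ?_
              rw [abs_mul]
            have hd1 : 2*(1/10:ℝ)^n/prodT t n ≤ 2*(1/10:ℝ)^n := by
              apply div_le_self (by positivity) hTn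
            have hd2 : (5/9)*(1/10:ℝ)^n/prodT t n ≤ (5/9)*(1/10:ℝ)^n := by
              apply div_le_self (by positivity) hTn
            have habs : (0:ℝ) ≤ |w 0| := abs_nonneg _
            have hB1' : |s₂ - slX t s n| * |w 0| ≤ (5/9)*(1/10:ℝ)^n * |w 0| := by
              apply mul_le_mul_of_nonneg_right _ habs
              linarith
            nlinarith
          have hten : Filter.Tendsto (fun n : ℕ => 3*(1/10:ℝ)^n*|w 0|)
              Filter.atTop (nhds 0) := by
            have h10 := tendsto_pow_atTop_nhds_zero_of_lt_one
              (by norm_num : (0:ℝ) ≤ 1/10) (by norm_num : (1/10:ℝ) < 1)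
            have := (h10.const_mul (3:ℝ)).mul_const (|w 0|)
            simpa using this
          have hz : |w 1 - s₂ * w 0| ≤ 0 := by
            apply ge_of_tendsto hten
            filter_upwards [Filter.eventually_ge_atTop 1] with n hn using hb n hn
          have := abs_nonneg (w 1 - s₂ * w 0)
          have : |w 1 - s₂ * w 0| = 0 := le_antisymm hz this
          have := abs_eq_zero.mp this
          linarith [this]
        have h2 : w 2 = s₃ * w 0 := by
          have hb : ∀ n, 1 ≤ n → |w 2 - s₃ * w 0| ≤ 3 * (1/10:ℝ)^n * |w 0| := by
            intro n hn
            have hTn := prodT_ge_one t ht n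
            have hqn : (0:ℝ) < (1/10:ℝ)^n := by positivity
            have hA1 : |w 2 - slY t c n * w 0| ≤ (2*(1/10:ℝ)^n/prodT t n) * |w 0| := by
              refine le_trans ?_ (hmem n hn)
              rw [show (w 1 - slX t s n * w 0)^2 + (w 2 - slY t c n * w 0)^2
                = (w 2 - slY t c n * w 0)^2 + (w 1 - slX t s n * w 0)^2 by ring]
              exact abs_le_sqrt' _ _
            have hB1 : |s₃ - slY t c n| ≤ (5/9)*(1/10:ℝ)^n/prodT t n := by
              refine le_trans ?_ (hphi n)
              rw [show (s₂ - slX t s n)^2 + (s₃ - slY t c n)^2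
                = (s₃ - slY t c n)^2 + (s₂ - slX t s n)^2 by ring]
              exact abs_le_sqrt' _ _
            have tri' : |w 2 - s₃*w 0|
                ≤ |w 2 - slY t c n * w 0| + |s₃ - slY t c n| * |w 0| := by
              have e : w 2 - s₃*w 0
                  = (w 2 - slY t c n * w 0) - (s₃ - slY t c n)*w 0 := by ring
              rw [e]
              refine (abs_sub _ _).trans ?_
              rw [abs_mul]
            have hd1 : 2*(1/10:ℝ)^n/prodT t n ≤ 2*(1/10:ℝ)^n := by
              apply div_le_self (by positivity) hTn
            have hd2 : (5/9)*(1/10:ℝ)^n/prodT t n ≤ (5/9)*(1/10:ℝ)^n := by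
              apply div_le_self (by positivity) hTn
            have habs : (0:ℝ) ≤ |w 0| := abs_nonneg _
            have hB1' : |s₃ - slY t c n| * |w 0| ≤ (5/9)*(1/10:ℝ)^n * |w 0| := by
              apply mul_le_mul_of_nonneg_right _ habs
              linarith
            nlinarith
          have hten : Filter.Tendsto (fun n : ℕ => 3*(1/10:ℝ)^n*|w 0|)
              Filter.atTop (nhds 0) := by
            have h10 := tendsto_pow_atTop_nhds_zero_of_lt_one
              (by norm_num : (0:ℝ) ≤ 1/10) (by norm_num : (1/10:ℝ) < 1)
            have := (h10.const_mul (3:ℝ)).mul_const (|w 0|)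
            simpa using this
          have hz : |w 2 - s₃ * w 0| ≤ 0 := by
            apply ge_of_tendsto hten
            filter_upwards [Filter.eventually_ge_atTop 1] with n hn using hb n hn
          have hge := abs_nonneg (w 2 - s₃ * w 0)
          have := abs_eq_zero.mp (le_antisymm hz hge)
          linarith [this]
        exact ⟨w 0, by funext i; fin_cases i <;> simp [h1, h2]⟩
      · rintro w ⟨u, rfl⟩
        simp only [Set.mem_iInter]
        intro n _
        rw [hImg n]
        simp only [Set.mem_setOf_eq, Matrix.cons_val_one, Matrix.head_cons,
          Matrix.cons_val_zero]
        have hTn := prodT_ge_one t ht n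
        have hqn : (0:ℝ) < (1/10:ℝ)^n := by positivity
        have e2 : (![u, s₂ * u, s₃ * u] : Fin 3 → ℝ) 2 = s₃ * u := rfl
        rw [e2]
        rw [show (s₂*u - slX t s n * u)^2 + (s₃*u - slY t c n * u)^2
          = (u*(s₂ - slX t s n))^2 + (u*(s₃ - slY t c n))^2 by ring, sqrt_mul']
        have habs : (0:ℝ) ≤ |u| := abs_nonneg _
        have := hphi n
        have hb : (5/9)*(1/10:ℝ)^n/prodT t n ≤ 2*(1/10:ℝ)^n/prodT t n := by
          gcongr
          norm_num
        calc |u| * Real.sqrt ((s₂ - slX t s n)^2 + (s₃ - slY t c n)^2)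
            ≤ |u| * ((5/9)*(1/10:ℝ)^n/prodT t n) := by
              apply mul_le_mul_of_nonneg_left this habs
          _ ≤ 2*(1/10:ℝ)^n/prodT t n * |u| := by
              rw [mul_comm]
              apply mul_le_mul_of_nonneg_right hb habs
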